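/- Every overlap-free infinite binary word w other than the Thue–Morse word t and its complement t̄ satisfies 1/4 ≤ LSD(w, t) ≤ USD(w, t) ≤ 3/4. -/

import Mathlib

/-- The Thue–Morse sequence as a binary sequence. -/
def tb (n : ℕ) : Bool := (Nat.digits 2 n).count 1 % 2 == 1

/-- A binary infinite word is overlap-free if it contains no factor of the
form `a x a x a` (a single letter `a`, possibly empty word `x`), i.e., no
factor of length `2k+1` with period `k` for some `k ≥ 1`. -/
def OverlapFree (w : ℕ → Bool) : Prop :=
  ¬ ∃ p k : ℕ, 0 < k ∧ ∀ j ≤ k, w (p + j) = w (p + k + j)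

noncomputable def SDp (x y : ℕ → Bool) (n : ℕ) : ℝ :=
  (∑ i ∈ Finset.range n, if x i = y i then (1 : ℝ) else 0) / n

noncomputable def LSD (x y : ℕ → Bool) : ℝ := Filter.liminf (SDp x y) Filter.atTop
noncomputable def USD (x y : ℕ → Bool) : ℝ := Filter.limsup (SDp x y) Filter.atTop



lemma tb_zero : tb 0 = false := by simp [tb]
lemma tb_two_mul (n : ℕ) : tb (2*n) = tb n := by
  rcases Nat.eq_zero_or_pos n with h | h
  · simp [h]
  · unfold tb
    rw [Nat.digits_def' (by norm_num) (by omega)]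
    simp [Nat.mul_div_cancel_left _ (by norm_num : 0 < 2), Nat.mul_mod_right]
lemma tb_two_mul_add_one (n : ℕ) : tb (2*n+1) = !tb n := by
  unfold tb
  rw [Nat.digits_def' (by norm_num) (by omega)]
  have h1 : (2*n+1) % 2 = 1 := by omega
  have h2 : (2*n+1) / 2 = n := by omega
  rw [h1, h2, List.count_cons]
  have key : ∀ c : ℕ, (((c+1) % 2 == 1) : Bool) = !(c % 2 == 1) := by
    intro c
    rcases Nat.mod_two_eq_zero_or_one c with h | h <;> simp [Nat.add_mod, h]
  simp only [if_pos, show ((1:ℕ) == 1) = true from rfl, if_true]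
  exact key _





def muw (z : ℕ → Bool) (m : ℕ) : Bool := if m % 2 = 0 then z (m/2) else !z (m/2)

lemma muw_even (z : ℕ → Bool) (j : ℕ) : muw z (2*j) = z j := by
  simp [muw, Nat.mul_mod_right, Nat.mul_div_cancel_left _ (by norm_num : 0 < 2)]

lemma muw_odd (z : ℕ → Bool) (j : ℕ) : muw z (2*j+1) = !z j := by
  have h1 : (2*j+1) % 2 = 1 := by omega
  have h2 : (2*j+1) / 2 = j := by omega
  simp [muw, h1, h2]

lemma muOF (w z : ℕ → Bool) (off : ℕ) (hm : ∀ m, w (off + m) = muw z m)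
    (hw : OverlapFree w) : OverlapFree z := by
  rintro ⟨p, k, hk, h⟩
  apply hw
  refine ⟨off + 2*p, 2*k, by omega, ?_⟩
  intro j hj
  rcases Nat.even_or_odd j with ⟨i, hi⟩ | ⟨i, hi⟩
  · have e1 : off + 2*p + j = off + 2*(p+i) := by omega
    have e2 : off + 2*p + 2*k + j = off + 2*(p+k+i) := by omega
    rw [e1, e2, hm, hm, muw_even, muw_even]
    exact h i (by omega)
  · have e1 : off + 2*p + j = off + (2*(p+i)+1) := by omega
    have e2 : off + 2*p + 2*k + j = off + (2*(p+k+i)+1) := by omega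
    rw [e1, e2, hm, hm, muw_odd, muw_odd]
    exact congrArg _ (h i (by omega))

def cnt (x y : ℕ → Bool) (n : ℕ) : ℕ :=
  (Finset.range n).sum (fun i => if x i = y i then 1 else 0)

lemma cnt_succ (x y : ℕ → Bool) (n : ℕ) :
    cnt x y (n+1) = cnt x y n + (if x n = y n then 1 else 0) :=
  Finset.sum_range_succ _ _

lemma cnt_le (x y : ℕ → Bool) (n : ℕ) : cnt x y n ≤ n := by
  induction n with
  | zero => simp [cnt]
  | succ n ih => rw [cnt_succ]; split <;> omega

lemma cnt_mono (x y : ℕ → Bool) {n m : ℕ} (h : n ≤ m) : cnt x y n ≤ cnt x y m := by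
  induction m with
  | zero => have hn : n = 0 := by omega
            subst hn; exact le_rfl
  | succ m ih =>
    rcases Nat.lt_or_ge n (m+1) with h' | h'
    · have hh := ih (by omega); rw [cnt_succ]; split <;> omega
    · have hn : n = m+1 := by omega
      subst hn; exact le_rfl

lemma cnt_add_le (x y : ℕ → Bool) (n m : ℕ) : cnt x y (n + m) ≤ cnt x y n + m := by
  induction m with
  | zero => simp
  | succ m ih => rw [show n+(m+1) = (n+m)+1 by omega, cnt_succ]; split <;> omega

def BND (x y : ℕ → Bool) : Prop :=
  ∃ C : ℕ, ∀ n, n ≤ 4 * cnt x y n + C ∧ 4 * cnt x y n ≤ 3 * n + C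

lemma BND_pair (x y x' y' : ℕ → Bool) (l : ℕ)
    (h : ∀ j, ((x (l+2*j) = y (l+2*j)) ↔ (x' j = y' j)) ∧
              ((x (l+2*j+1) = y (l+2*j+1)) ↔ (x' j = y' j)))
    (hb : BND x' y') : BND x y := by
  obtain ⟨C, hC⟩ := hb
  have key : ∀ m, cnt x y (l + 2*m) = cnt x y l + 2 * cnt x' y' m := by
    intro m
    induction m with
    | zero => simp [cnt]
    | succ m ih =>
      have e1 : l + 2*(m+1) = (l+2*m+1)+1 := by omega
      rw [e1, cnt_succ, show l+2*m+1 = (l+2*m)+1 by omega, cnt_succ, ih, cnt_succ]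
      have h1 := (h m).1
      have h2 := (h m).2
      rw [show (l+2*m)+1 = l+2*m+1 by omega]
      by_cases hc : x' m = y' m
      · rw [if_pos (h1.mpr hc), if_pos (h2.mpr hc), if_pos hc]; ring
      · rw [if_neg (fun q => hc (h1.mp q)), if_neg (fun q => hc (h2.mp q)), if_neg hc]; ring
  refine ⟨2*C + 4*l + 8, ?_⟩
  intro n
  rcases Nat.lt_or_ge n (l+2) with hn | hn
  · have := cnt_le x y n; omega
  · set m := (n - l)/2 with hm
    have hml : l + 2*m ≤ n := by omega
    have hmu : n ≤ l + 2*m + 1 := by omega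
    have hk := key m
    have hCm := hC m
    have c1 : cnt x y (l+2*m) ≤ cnt x y n := cnt_mono _ _ hml
    have c2 : cnt x y n ≤ cnt x y (l+2*m) + 1 := by
      have := cnt_add_le x y (l+2*m) (n - (l+2*m))
      have := cnt_mono x y (show n ≤ (l+2*m) + 1 by omega)
      have := cnt_add_le x y (l+2*m) 1
      omega
    have c3 : cnt x y l ≤ l := cnt_le _ _ _
    omega

lemma BND_odd (x y : ℕ → Bool) (l : ℕ)
    (h : ∀ i, (x (l+4*i) = y (l+4*i)) ↔ ¬(x (l+4*i+1) = y (l+4*i+1))) : BND x y := by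
  have key : ∀ m, m ≤ cnt x y (l + 4*m) ∧ cnt x y (l+4*m) ≤ l + 3*m := by
    intro m
    induction m with
    | zero => simpa using cnt_le x y l
    | succ m ih =>
      have e4 : l + 4*(m+1) = (l+4*m+3)+1 := by omega
      have e3 : l+4*m+3 = (l+4*m+2)+1 := by omega
      have e2 : l+4*m+2 = (l+4*m+1)+1 := by omega
      have hone : cnt x y (l+4*m+2) = cnt x y (l+4*m) + 1 := by
        rw [e2, cnt_succ, cnt_succ]
        have hi := h m
        by_cases hc : x (l+4*m) = y (l+4*m)
        · rw [if_pos hc, if_neg (hi.mp hc)]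
        · rw [if_neg hc, if_pos (by by_contra q; exact hc (hi.mpr q))]
      rw [e4, cnt_succ, e3, cnt_succ]
      split <;> split <;> omega
  refine ⟨4*l + 16, ?_⟩
  intro n
  rcases Nat.lt_or_ge n l with hn | hn
  · have := cnt_le x y n; omega
  · set m := (n - l)/4 with hm
    have hml : l + 4*m ≤ n := by omega
    have hmu : n ≤ l + 4*m + 3 := by omega
    have hk := key m
    have c1 : cnt x y (l+4*m) ≤ cnt x y n := cnt_mono _ _ hml
    have c2 : cnt x y n ≤ cnt x y (l+4*m) + (n - (l+4*m)) := by
      have := cnt_add_le x y (l+4*m) (n - (l+4*m))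
      have e : l+4*m + (n - (l+4*m)) = n := by omega
      rw [e] at this; exact this
    omega


-- new material
lemma bool_neq {a b : Bool} (h : a ≠ b) : b = !a := by
  cases a <;> cases b <;> simp_all

lemma no_aaa {w : ℕ → Bool} (hw : OverlapFree w) (i : ℕ) :
    ¬(w i = w (i+1) ∧ w (i+1) = w (i+2)) := by
  rintro ⟨h1, h2⟩
  apply hw
  refine ⟨i, 1, one_pos, ?_⟩
  intro j hj
  interval_cases j
  · exact h1
  · rw [show i+1+1 = i+2 by omega]; exact h2

lemma pairs_exist {w : ℕ → Bool} (hw : OverlapFree w) (N : ℕ) :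
    ∃ i, N ≤ i ∧ w i = w (i+1) := by
  by_contra h
  push_neg at h
  have f : ∀ i, N ≤ i → w (i+1) = !w i := fun i hi => bool_neq (h i hi)
  have v1 : w (N+1) = !w N := f N le_rfl
  have v2 : w (N+2) = w N := by
    rw [show N+2 = (N+1)+1 by omega, f (N+1) (by omega), v1, Bool.not_not]
  have v3 : w (N+3) = !w N := by
    rw [show N+3 = (N+2)+1 by omega, f (N+2) (by omega), v2]
  have v4 : w (N+4) = w N := by
    rw [show N+4 = (N+3)+1 by omega, f (N+3) (by omega), v3, Bool.not_not]
  apply hw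
  refine ⟨N, 2, two_pos, ?_⟩
  intro j hj
  interval_cases j
  · rw [show N+2+0 = N+2 by omega, show N+0 = N by omega, v2]
  · rw [show N+2+1 = N+3 by omega, v1, v3]
  · rw [show N+2+2 = N+4 by omega, v2, v4]

lemma pair_parity {w : ℕ → Bool} (hw : OverlapFree w) :
    ∀ d i, 1 ≤ i → w i = w (i+1) → w (i+d) = w (i+d+1) → d % 2 = 0 := by
  intro d
  induction d using Nat.strong_induction_on with
  | _ d IH =>
  intro i hi hpi hpd
  by_contra hodd
  have hd1 : d % 2 = 1 := by omega
  rcases Nat.lt_or_ge d 2 with hd | hd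
  · have : d = 1 := by omega
    subst this
    exact no_aaa hw i ⟨hpi, by rw [show i+2 = i+1+1 by omega]; exact hpd⟩
  · by_cases hqex : ∃ q, 0 < q ∧ q < d ∧ w (i+q) = w (i+q+1)
    · obtain ⟨q, hq0, hqd, hqp⟩ := hqex
      rcases Nat.mod_two_eq_zero_or_one q with hqe | hqo
      · have := IH (d - q) (by omega) (i+q) (by omega) hqp
          (by have e1 : i+q+(d-q) = i+d := by omega
              rw [e1]; exact hpd)
        omega
      · have := IH q hqd i hi hpi hqp
        omega
    · push_neg at hqex
      have vals : ∀ s, s ≤ d - 1 → w (i+1+s) = (if s % 2 = 0 then w i else !w i) := by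
        intro s
        induction s with
        | zero => intro _; simpa using hpi.symm
        | succ s ihs =>
          intro hs
          have hv := ihs (by omega)
          have hne : w (i+(s+1)) ≠ w (i+(s+1)+1) := hqex (s+1) (by omega) (by omega)
          have hflip : w (i+(s+1)+1) = !w (i+(s+1)) := bool_neq hne
          rw [show i+1+(s+1) = i+(s+1)+1 by omega, hflip, show i+(s+1) = i+1+s by omega, hv]
          rcases Nat.mod_two_eq_zero_or_one s with hs2 | hs2
          · rw [if_pos hs2, if_neg (by omega)]
          · rw [if_neg (by omega), if_pos (by omega), Bool.not_not]
      rcases Nat.lt_or_ge d 5 with hd5 | hd5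
      · -- d = 3
        have hd3 : d = 3 := by omega
        subst hd3
        obtain ⟨i', rfl⟩ : ∃ i', i = i' + 1 := ⟨i - 1, by omega⟩
        have A2 : w (i'+1+2) = !w (i'+1) := by
          have := vals 1 (by omega); rw [show i'+1+1+1 = i'+1+2 by omega] at this
          simpa using this
        have A3 : w (i'+1+3) = w (i'+1) := by
          have := vals 2 (by omega); rw [show i'+1+1+2 = i'+1+3 by omega] at this
          simpa using this
        have A4 : w (i'+1+4) = w (i'+1) := by
          rw [show i'+1+4 = i'+1+3+1 by omega, ← hpd, A3]
        have A5 : w (i'+1+5) = !w (i'+1) := by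
          have hna := no_aaa hw (i'+1+3)
          rw [show i'+1+3+1 = i'+1+4 by omega, show i'+1+3+2 = i'+1+5 by omega] at hna
          have h45 : w (i'+1+4) ≠ w (i'+1+5) := fun hcon => hna ⟨by rw [A3, A4], hcon⟩
          rw [bool_neq h45, A4]
        have Am : w i' = !w (i'+1) := by
          have hna := no_aaa hw i'
          rw [show i'+2 = i'+1+1 by omega] at hna
          have h01 : w i' ≠ w (i'+1) := fun hcon => hna ⟨hcon, hpi⟩
          exact bool_neq (Ne.symm h01)
        apply hw
        refine ⟨i', 3, by omega, ?_⟩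
        intro j hj
        interval_cases j
        · rw [show i'+3+0 = i'+1+2 by omega, show i'+0 = i' by omega, Am, A2]
        · rw [show i'+3+1 = i'+1+3 by omega, A3]
        · rw [show i'+3+2 = i'+1+4 by omega, show i'+2 = i'+1+1 by omega, A4, ← hpi]
        · rw [show i'+3+3 = i'+1+5 by omega, show i'+3 = i'+1+2 by omega, A2, A5]
      · -- d ≥ 5
        apply hw
        refine ⟨i+1, 2, two_pos, ?_⟩
        intro j hj
        have h1 := vals j (by omega)
        have h2 := vals (j+2) (by omega)
        rw [show i+1+2+j = i+1+(j+2) by omega, h1, h2]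
        rcases Nat.mod_two_eq_zero_or_one j with hj2 | hj2
        · rw [if_pos hj2, if_pos (by omega)]
        · rw [if_neg (by omega), if_neg (by omega)]

theorem struct_thm {w : ℕ → Bool} (hw : OverlapFree w) :
    (∃ z, OverlapFree z ∧ ∀ m, w m = muw z m) ∨
    (∃ z, OverlapFree z ∧ ∀ m, w (1+m) = muw z m) ∨
    (∃ z, OverlapFree z ∧ w 0 = w 1 ∧ ∀ m, w (2+m) = muw z m) := by
  obtain ⟨i1, hi1N, hi1p⟩ := pairs_exist hw 1
  rcases Nat.mod_two_eq_zero_or_one i1 with hpar | hpar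
  · -- i1 even : blocks at odd positions, x single letter
    have huneq : ∀ j, w (2*j+1) ≠ w (2*j+2) := by
      intro j hcon
      have hcon' : w (2*j+1) = w ((2*j+1)+1) := by
        rw [show (2*j+1)+1 = 2*j+2 by omega]; exact hcon
      rcases Nat.lt_or_ge (2*j+1) i1 with ho | ho
      · have := pair_parity hw (i1 - (2*j+1)) (2*j+1) (by omega) hcon'
          (by have e : 2*j+1+(i1-(2*j+1)) = i1 := by omega
              rw [e]; exact hi1p)
        omega
      · rcases Nat.eq_or_lt_of_le ho with he | ho'
        · omega
        · have := pair_parity hw ((2*j+1) - i1) i1 hi1N hi1p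
            (by have e : i1+((2*j+1)-i1) = 2*j+1 := by omega
                rw [e]; exact hcon')
          omega
    have hm : ∀ m, w (1+m) = muw (fun j => w (1+2*j)) m := by
      intro m
      rcases Nat.even_or_odd m with ⟨j, hj⟩ | ⟨j, hj⟩
      · rw [show m = 2*j by omega, muw_even]
      · rw [show m = 2*j+1 by omega, muw_odd, show 1+(2*j+1) = 2*j+2 by omega]
        rw [bool_neq (huneq j), show 2*j+1 = 1+2*j by omega]
    exact Or.inr (Or.inl ⟨_, muOF w _ 1 hm hw, hm⟩)
  · -- i1 odd : blocks at even positions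
    have huneq : ∀ j, 1 ≤ j → w (2*j) ≠ w (2*j+1) := by
      intro j hj hcon
      rcases Nat.lt_or_ge (2*j) i1 with ho | ho
      · have := pair_parity hw (i1 - 2*j) (2*j) (by omega) hcon
          (by have e : 2*j+(i1-2*j) = i1 := by omega
              rw [e]; exact hi1p)
        omega
      · rcases Nat.eq_or_lt_of_le ho with he | ho'
        · omega
        · have := pair_parity hw (2*j - i1) i1 hi1N hi1p
            (by have e : i1+(2*j-i1) = 2*j := by omega
                rw [e]; exact hcon)
          omega
    by_cases h01 : w 0 = w 1
    · have hm : ∀ m, w (2+m) = muw (fun j => w (2+2*j)) m := by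
        intro m
        rcases Nat.even_or_odd m with ⟨j, hj⟩ | ⟨j, hj⟩
        · rw [show m = 2*j by omega, muw_even]
        · rw [show m = 2*j+1 by omega, muw_odd]
          have := bool_neq (huneq (j+1) (by omega))
          rw [show 2+(2*j+1) = 2*(j+1)+1 by omega, this, show 2*(j+1) = 2+2*j by omega]
      exact Or.inr (Or.inr ⟨_, muOF w _ 2 hm hw, h01, hm⟩)
    · have hm : ∀ m, w m = muw (fun j => w (2*j)) m := by
        intro m
        rcases Nat.even_or_odd m with ⟨j, hj⟩ | ⟨j, hj⟩
        · rw [show m = 2*j by omega, muw_even]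
        · rw [show m = 2*j+1 by omega, muw_odd]
          rcases Nat.eq_zero_or_pos j with h0 | hj1
          · subst h0
            simpa using bool_neq h01
          · exact bool_neq (huneq j hj1)
      exact Or.inl ⟨_, muOF w _ 0 (by simpa using hm) hw, hm⟩


lemma muw0 (z : ℕ → Bool) : muw z 0 = z 0 := by simp [muw]
lemma muw1 (z : ℕ → Bool) : muw z 1 = !z 0 := by simp [muw]
lemma muw2 (z : ℕ → Bool) : muw z 2 = z 1 := by simp [muw]
lemma muw3 (z : ℕ → Bool) : muw z 3 = !z 1 := by
  have h1 : (3:ℕ) % 2 = 1 := by norm_num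
  have h2 : (3:ℕ) / 2 = 1 := by norm_num
  simp [muw, h1, h2]
lemma bool_nneq {a b : Bool} (h : ¬ a = !b) : a = b := by cases a <;> cases b <;> simp_all
lemma bool_not_xor (a b : Bool) : (!(a ^^ b)) = ((!a) ^^ b) := by cases a <;> cases b <;> rfl

-- tb at power blocks
lemma tb_pow_add {k i : ℕ} (h : i < 2^k) : tb (2^k + i) = !tb i := by
  induction k generalizing i with
  | zero =>
    have : i = 0 := by simpa using h
    subst this
    rw [show 2^0 + 0 = 2*0+1 by norm_num, tb_two_mul_add_one]
  | succ k ih =>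
    rcases Nat.even_or_odd i with ⟨q, hq⟩ | ⟨q, hq⟩
    · have hq' : q < 2^k := by subst hq; have := Nat.pow_succ 2 k ▸ h; omega
      have e : 2^(k+1) + i = 2*(2^k + q) := by rw [Nat.pow_succ]; omega
      rw [e, tb_two_mul, ih hq', show i = 2*q by omega, tb_two_mul]
    · have hq' : q < 2^k := by
        have := Nat.pow_succ 2 k ▸ h; omega
      have e : 2^(k+1) + i = 2*(2^k + q)+1 := by rw [Nat.pow_succ]; omega
      rw [e, tb_two_mul_add_one, ih hq', show i = 2*q+1 by omega, tb_two_mul_add_one,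
        Bool.not_not]

-- chain value formula
lemma chain_val (U : ℕ → ℕ → Bool) (hU : ∀ i m, U i (1+m) = muw (U (i+1)) m) :
    ∀ k j i, i < 2^k → U j (2^k - 1 + i) = xor (tb i) (U (j+k) 0) := by
  intro k
  induction k with
  | zero =>
    intro j i hi
    have : i = 0 := by simpa using hi
    subst this
    simp [tb_zero]
  | succ k ih =>
    intro j i hi
    rcases Nat.even_or_odd i with ⟨q, hq⟩ | ⟨q, hq⟩
    · have hq' : q < 2^k := by have := Nat.pow_succ 2 k ▸ hi; omega
      have hp : 1 ≤ 2^k := Nat.one_le_two_pow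
      have e : 2^(k+1) - 1 + i = 1 + (2*(2^k - 1 + q)) := by rw [Nat.pow_succ]; omega
      rw [e, hU, muw_even, ih (j+1) q hq', show i = 2*q by omega, tb_two_mul,
        show j+1+k = j+(k+1) by omega]
    · have hq' : q < 2^k := by have := Nat.pow_succ 2 k ▸ hi; omega
      have hp : 1 ≤ 2^k := Nat.one_le_two_pow
      have e : 2^(k+1) - 1 + i = 1 + (2*(2^k - 1 + q)+1) := by rw [Nat.pow_succ]; omega
      rw [e, hU, muw_odd, ih (j+1) q hq', show i = 2*q+1 by omega, tb_two_mul_add_one,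
        bool_not_xor, show j+1+k = j+(k+1) by omega]

-- rigidity
lemma chain_rigid (v : ℕ → Bool) (U : ℕ → ℕ → Bool) (hv : OverlapFree v)
    (h01 : v 0 = v 1) (hvU : ∀ m, v (2+m) = muw (U 0) m)
    (hU : ∀ i m, U i (1+m) = muw (U (i+1)) m) :
    ∀ i, U i 0 = (if i % 2 = 0 then !v 0 else v 0) := by
  have hOF : ∀ i, OverlapFree (U i) := by
    intro i
    induction i with
    | zero => exact muOF v (U 0) 2 hvU hv
    | succ i ih => exact muOF (U i) (U (i+1)) 1 (hU i) ih
  have base0 : U 0 0 = !v 0 := by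
    by_contra hne
    have hEq : U 0 0 = v 0 := bool_nneq hne
    apply hv
    refine ⟨0, 1, one_pos, ?_⟩
    intro j hj
    interval_cases j
    · exact h01
    · show v 1 = v 2
      rw [show (2:ℕ) = 2+0 by rfl, hvU, muw0, hEq, h01]
  have base1 : U 1 0 = !U 0 0 := by
    by_contra hne
    have hEq : U 1 0 = U 0 0 := bool_nneq hne
    have v2 : v 2 = U 0 0 := by rw [show (2:ℕ) = 2+0 by rfl, hvU, muw0]
    have v3 : v 3 = !U 0 0 := by rw [show (3:ℕ) = 2+1 by rfl, hvU, muw1]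
    have u01 : U 0 1 = U 0 0 := by
      rw [show (1:ℕ) = 1+0 by rfl, hU, muw0, hEq]
    have v4 : v 4 = U 0 0 := by rw [show (4:ℕ) = 2+2 by rfl, hvU, muw2, u01]
    have v5 : v 5 = !U 0 0 := by rw [show (5:ℕ) = 2+3 by rfl, hvU, muw3, u01]
    apply hv
    refine ⟨1, 2, two_pos, ?_⟩
    intro j hj
    interval_cases j
    · show v 1 = v 3
      rw [v3, base0, Bool.not_not, h01]
    · show v 2 = v 4
      rw [v2, v4]
    · show v 3 = v 5
      rw [v3, v5]
  have step : ∀ L, U (L+1) 0 = !U L 0 → U (L+2) 0 = !U (L+1) 0 := by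
    intro L hflip
    by_contra hne
    have hEq : U (L+2) 0 = U (L+1) 0 := bool_nneq hne
    have u0 : U L 0 = !U (L+1) 0 := by rw [hflip, Bool.not_not]
    have u1 : U L 1 = U (L+1) 0 := by rw [show (1:ℕ) = 1+0 by rfl, hU, muw0]
    have u2 : U L 2 = !U (L+1) 0 := by rw [show (2:ℕ) = 1+1 by rfl, hU, muw1]
    have u11 : U (L+1) 1 = U (L+1) 0 := by
      rw [show (1:ℕ) = 1+0 by rfl, hU, muw0, hEq]
    have u3 : U L 3 = U (L+1) 0 := by rw [show (3:ℕ) = 1+2 by rfl, hU, muw2, u11]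
    have u4 : U L 4 = !U (L+1) 0 := by rw [show (4:ℕ) = 1+3 by rfl, hU, muw3, u11]
    apply hOF L
    refine ⟨0, 2, two_pos, ?_⟩
    intro j hj
    interval_cases j
    · show U L 0 = U L 2
      rw [u0, u2]
    · show U L 1 = U L 3
      rw [u1, u3]
    · show U L 2 = U L 4
      rw [u2, u4]
  have flip : ∀ i, U (i+1) 0 = !U i 0 := by
    intro i
    induction i with
    | zero => exact base1
    | succ i ih => exact step i ih
  intro i
  induction i with
  | zero => rw [if_pos (by norm_num), base0]
  | succ i ih =>
    rw [flip i, ih]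
    rcases Nat.mod_two_eq_zero_or_one i with hp | hp
    · rw [if_pos hp, if_neg (by omega), Bool.not_not]
    · rw [if_neg (by omega), if_pos (by omega)]


-- partial geometric sums indexed by parity
def pgs (z K : ℕ) : ℕ := (Finset.range K).sum (fun k => if k % 2 = z then 2^k else 0)

lemma pgs_succ (z K : ℕ) : pgs z (K+1) = pgs z K + (if K % 2 = z then 2^K else 0) :=
  Finset.sum_range_succ _ _

lemma pgs_bounds : ∀ K, 2^K ≤ 3 * pgs (K%2) K + 2 ∧ 2^(K+1) ≤ 3 * pgs ((K+1)%2) K + 2 := by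
  intro K
  induction K with
  | zero => simp [pgs]
  | succ K ih =>
    obtain ⟨h1, h2⟩ := ih
    constructor
    · rw [pgs_succ, if_neg (by omega)]
      -- (K+1)%2 ≠ K%2
      have : ((K+1)+1) % 2 = K % 2 := by omega
      -- goal: 2^(K+1) ≤ 3 * pgs ((K+1)%2) (K+1) + 2 ; pgs ((K+1)%2) (K+1) = pgs ((K+1)%2) K
      exact h2
    · rw [pgs_succ]
      have hpar : ((K+1)+1) % 2 = K % 2 := by omega
      rw [hpar, if_pos rfl]
      have : 2^((K+1)+1) = 2^K + 3*2^K := by rw [pow_succ, pow_succ]; ring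
      omega

lemma pgs_total (K : ℕ) : pgs 0 K + pgs 1 K = 2^K - 1 := by
  induction K with
  | zero => simp [pgs]
  | succ K ih =>
    rw [pgs_succ, pgs_succ]
    have hp : 1 ≤ 2^K := Nat.one_le_two_pow
    rcases Nat.mod_two_eq_zero_or_one K with h | h
    · rw [if_pos h, if_neg (by omega), pow_succ]; omega
    · rw [if_neg (by omega), if_pos h, pow_succ]; omega

lemma cnt_log_formula (x y : ℕ → Bool) (z : ℕ)
    (h : ∀ m, (x m = y m) ↔ Nat.log 2 (m+1) % 2 = z) :
    ∀ K, ∀ i ≤ 2^K, cnt x y (2^K - 1 + i) = pgs z K + (if K % 2 = z then i else 0) := by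
  intro K
  induction K with
  | zero =>
    intro i hi
    interval_cases i
    · simp [cnt, pgs]
    · rw [show 2^0 - 1 + 1 = 0 + 1 by norm_num, cnt_succ]
      have hl : Nat.log 2 (0+1) = 0 := by simp
      have hiff := h 0
      rw [hl] at hiff
      simp only [pgs, Finset.range_zero, Finset.sum_empty]
      by_cases hz : 0 % 2 = z
      · rw [if_pos (by omega : 0 % 2 = z), if_pos (hiff.mpr (by omega)), cnt]
        simp
      · rw [if_neg hz, if_neg (fun q => hz (by have := hiff.mp q; omega)), cnt]
        simp
  | succ K ih =>
    intro i
    induction i with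
    | zero =>
      intro hi
      have hp : 1 ≤ 2^K := Nat.one_le_two_pow
      have e : 2^(K+1) - 1 + 0 = 2^K - 1 + 2^K := by rw [pow_succ]; omega
      rw [e, ih (2^K) le_rfl, pgs_succ, ite_self]
      omega
    | succ i ihi =>
      intro hi
      have hp : 1 ≤ 2^(K+1) := Nat.one_le_two_pow
      have hprev := ihi (by omega)
      have e : 2^(K+1) - 1 + (i+1) = (2^(K+1) - 1 + i) + 1 := by omega
      rw [e, cnt_succ, hprev]
      have hm : (2^(K+1) - 1 + i) + 1 = 2^(K+1) + i := by omega
      have hl : Nat.log 2 (2^(K+1) + i) = K+1 := by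
        apply Nat.log_eq_of_pow_le_of_lt_pow
        · omega
        · rw [pow_succ]
          have : i < 2^(K+1) := by omega
          omega
      have hiff := h (2^(K+1) - 1 + i)
      rw [hm, hl] at hiff
      by_cases hz : (K+1) % 2 = z
      · rw [if_pos (hiff.mpr hz), if_pos hz, if_pos hz]
        omega
      · rw [if_neg (fun q => hz (hiff.mp q)), if_neg hz, if_neg hz]

lemma cnt_log_lower (x y : ℕ → Bool) (z : ℕ) (hz : z < 2)
    (h : ∀ m, (x m = y m) ↔ Nat.log 2 (m+1) % 2 = z) :
    ∀ n, n ≤ 3 * cnt x y n + 2 := by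
  intro n
  rcases Nat.eq_zero_or_pos n with h0 | h0
  · omega
  · set K := Nat.log 2 n with hK
    have hlb : 2^K ≤ n := Nat.pow_log_le_self 2 (by omega)
    have hub : n < 2^(K+1) := Nat.lt_pow_succ_log_self (by norm_num) n
    set i := n - (2^K - 1) with hi
    have hp : 1 ≤ 2^K := Nat.one_le_two_pow
    have hile : i ≤ 2^K := by rw [pow_succ] at hub; omega
    have hform := cnt_log_formula x y z h K i hile
    have hn : 2^K - 1 + i = n := by omega
    rw [hn] at hform
    obtain ⟨hb1, hb2⟩ := pgs_bounds K
    by_cases hzK : K % 2 = z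
    · rw [hform, if_pos hzK]
      have : pgs (K % 2) K = pgs z K := by rw [hzK]
      omega
    · have hz2 : (K+1) % 2 = z := by omega
      rw [hform, if_neg hzK]
      have : pgs ((K+1) % 2) K = pgs z K := by rw [hz2]
      rw [pow_succ] at hub
      omega

lemma cnt_compl (x y : ℕ → Bool) (n : ℕ) : cnt x y n + cnt x (fun m => !y m) n = n := by
  induction n with
  | zero => simp [cnt]
  | succ n ih =>
    rw [cnt_succ, cnt_succ]
    by_cases hc : x n = y n
    · have hne : ¬ (x n = (fun m => !y m) n) := by
        simp only
        cases hxn : x n <;> cases hyn : y n <;> simp_all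
      rw [if_pos hc, if_neg hne]
      omega
    · have hp2 : x n = (fun m => !y m) n := by
        simp only
        cases hxn : x n <;> cases hyn : y n <;> simp_all
      rw [if_neg hc, if_pos hp2]
      omega

lemma BND_log (x y : ℕ → Bool) (z : ℕ) (hz : z < 2)
    (h : ∀ m, (x m = y m) ↔ Nat.log 2 (m+1) % 2 = z) : BND x y := by
  have hlow := cnt_log_lower x y z hz h
  have hcompl : ∀ m, (x m = (fun m => !y m) m) ↔ Nat.log 2 (m+1) % 2 = (1 - z) := by
    intro m
    have hpar := Nat.mod_two_eq_zero_or_one (Nat.log 2 (m+1))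
    constructor
    · intro hq
      have hxy : ¬ (x m = y m) := by
        simp only at hq
        cases hxm : x m <;> cases hym : y m <;> simp_all
      have hnz : ¬ (Nat.log 2 (m+1) % 2 = z) := fun q => hxy ((h m).mpr q)
      omega
    · intro hq
      have hne : ¬ (Nat.log 2 (m+1) % 2 = z) := by omega
      have hxy : ¬ (x m = y m) := fun q => hne ((h m).mp q)
      simp only
      cases hxm : x m <;> cases hym : y m <;> simp_all
  have hlow2 := cnt_log_lower x (fun m => !y m) (1-z) (by omega) hcompl
  refine ⟨3, ?_⟩
  intro n
  have hc := cnt_compl x y n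
  have h1 := hlow n
  have h2 := hlow2 n
  have h3 := cnt_le x y n
  omega


open Filter

lemma SDp_eq (x y : ℕ → Bool) (n : ℕ) : SDp x y n = (cnt x y n : ℝ) / n := by
  unfold SDp cnt
  congr 1
  rw [Nat.cast_sum]
  refine Finset.sum_congr rfl (fun i _ => ?_)
  split <;> simp

lemma final_bounds (x y : ℕ → Bool) (hb : BND x y) :
    1/4 ≤ LSD x y ∧ LSD x y ≤ USD x y ∧ USD x y ≤ 3/4 := by
  obtain ⟨C, hC⟩ := hb
  have hn0 : ∀ n : ℕ, 1 ≤ n → (0:ℝ) < n := by intro n hn; exact_mod_cast Nat.pos_of_ne_zero (by omega)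
  have hSD0 : ∀ n, 0 ≤ SDp x y n := by
    intro n
    rw [SDp_eq]
    positivity
  have hSD1 : ∀ n, SDp x y n ≤ 1 := by
    intro n
    rw [SDp_eq]
    rcases Nat.eq_zero_or_pos n with h0 | h0
    · subst h0; simp
    · rw [div_le_one (hn0 n h0)]
      exact_mod_cast cnt_le x y n
  have hlo : ∀ n, 1 ≤ n → 1/4 - (C:ℝ)/n ≤ SDp x y n := by
    intro n hn
    have h1 : (n:ℝ) ≤ 4 * cnt x y n + C := by exact_mod_cast (hC n).1
    rw [SDp_eq, le_div_iff₀ (hn0 n hn)]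
    have hCnn : (0:ℝ) ≤ C := by positivity
    have : (1/4 - (C:ℝ)/n) * n = n/4 - C := by
      field_simp
    rw [this]
    linarith
  have hup : ∀ n, 1 ≤ n → SDp x y n ≤ 3/4 + (C:ℝ)/n := by
    intro n hn
    have h1 : 4 * (cnt x y n : ℝ) ≤ 3 * n + C := by exact_mod_cast (hC n).2
    rw [SDp_eq, div_le_iff₀ (hn0 n hn)]
    have : (3/4 + (C:ℝ)/n) * n = 3*n/4 + C := by field_simp
    rw [this]
    linarith
  have tzero : Tendsto (fun n : ℕ => (C:ℝ)/n) atTop (nhds 0) :=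
    tendsto_const_div_atTop_nhds_zero_nat (C:ℝ)
  have tlo : Tendsto (fun n : ℕ => 1/4 - (C:ℝ)/n) atTop (nhds (1/4)) := by
    simpa using tendsto_const_nhds.sub tzero
  have tup : Tendsto (fun n : ℕ => 3/4 + (C:ℝ)/n) atTop (nhds (3/4)) := by
    simpa using tendsto_const_nhds.add tzero
  have hbdd_above : IsBoundedUnder (· ≤ ·) atTop (SDp x y) :=
    isBoundedUnder_of ⟨1, hSD1⟩
  have hbdd_below : IsBoundedUnder (· ≥ ·) atTop (SDp x y) :=
    isBoundedUnder_of ⟨0, fun n => hSD0 n⟩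
  refine ⟨?_, ?_, ?_⟩
  · have h1 : (1/4 : ℝ) = liminf (fun n : ℕ => 1/4 - (C:ℝ)/n) atTop := (tlo.liminf_eq).symm
    rw [LSD, h1]
    apply liminf_le_liminf
    · exact eventually_atTop.mpr ⟨1, hlo⟩
    · exact tlo.isBoundedUnder_ge
    · exact hbdd_above.isCoboundedUnder_ge
  · exact liminf_le_limsup hbdd_above hbdd_below
  · have h1 : (3/4 : ℝ) = limsup (fun n : ℕ => 3/4 + (C:ℝ)/n) atTop := (tup.limsup_eq).symm
    rw [USD, h1]
    apply limsup_le_limsup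
    · exact eventually_atTop.mpr ⟨1, hup⟩
    · exact hbdd_below.isCoboundedUnder_le
    · exact tup.isBoundedUnder_le


-- Bool helpers
lemma bool_not_iff (a b : Bool) : ((!a) = (!b)) ↔ (a = b) := by cases a <;> cases b <;> simp
lemma bool_flip_iff (a c : Bool) : (a = c) ↔ ¬((!a) = c) := by cases a <;> cases c <;> simp
lemma bool_xor_eq_not (a b : Bool) : ((a ^^ b) = !a) ↔ b = true := by
  cases a <;> cases b <;> simp

def tb1 (j : ℕ) : Bool := tb (j+1)

-- all the parity transfer instances
lemma BND_E0 (x z : ℕ → Bool) (hx : ∀ m, x m = muw z m) (hb : BND z tb) : BND x tb := by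
  apply BND_pair x tb z tb 0 _ hb
  intro j
  constructor
  · rw [show 0+2*j = 2*j by omega, hx, muw_even, tb_two_mul]
  · rw [show 0+2*j+1 = 2*j+1 by omega, hx, muw_odd, tb_two_mul_add_one, bool_not_iff]

lemma BND_E1' (x z : ℕ → Bool) (hx : ∀ m, x (1+m) = muw z m) (hb : BND z tb1) :
    BND x tb1 := by
  apply BND_pair x tb1 z tb1 1 _ hb
  intro j
  constructor
  · have e1 : x (1+2*j) = z j := by rw [hx, muw_even]
    have e2 : tb1 (1+2*j) = tb1 j := by
      show tb (1+2*j+1) = tb (j+1)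
      rw [show 1+2*j+1 = 2*(j+1) by omega, tb_two_mul]
    rw [e1, e2]
  · have e1 : x (1+2*j+1) = !z j := by
      rw [show 1+2*j+1 = 1+(2*j+1) by omega, hx, muw_odd]
    have e2 : tb1 (1+2*j+1) = !tb1 j := by
      show tb (1+2*j+1+1) = !tb (j+1)
      rw [show 1+2*j+1+1 = 2*(j+1)+1 by omega, tb_two_mul_add_one]
    rw [e1, e2, bool_not_iff]

lemma BND_E2 (x z : ℕ → Bool) (hx : ∀ m, x (2+m) = muw z m) (hb : BND z tb1) :
    BND x tb := by
  apply BND_pair x tb z tb1 2 _ hb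
  intro j
  constructor
  · have e1 : x (2+2*j) = z j := by rw [hx, muw_even]
    have e2 : tb (2+2*j) = tb1 j := by
      show tb (2+2*j) = tb (j+1)
      rw [show 2+2*j = 2*(j+1) by omega, tb_two_mul]
    rw [e1, e2]
  · have e1 : x (2+2*j+1) = !z j := by
      rw [show 2+2*j+1 = 2+(2*j+1) by omega, hx, muw_odd]
    have e2 : tb (2+2*j+1) = !tb1 j := by
      show tb (2+2*j+1) = !tb (j+1)
      rw [show 2+2*j+1 = 2*(j+1)+1 by omega, tb_two_mul_add_one]
    rw [e1, e2, bool_not_iff]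

lemma BND_O1 (x z : ℕ → Bool) (hx : ∀ m, x (1+m) = muw z m) : BND x tb := by
  apply BND_odd x tb 1
  intro i
  have e1 : x (1+4*i) = z (2*i) := by
    rw [hx, show (4*i : ℕ) = 2*(2*i) by omega, muw_even]
  have e2 : tb (1+4*i) = !tb i := by
    rw [show 1+4*i = 2*(2*i)+1 by omega, tb_two_mul_add_one, tb_two_mul]
  have e3 : x (1+4*i+1) = !z (2*i) := by
    rw [show 1+4*i+1 = 1+(4*i+1) by omega, hx, show 4*i+1 = 2*(2*i)+1 by omega, muw_odd]
  have e4 : tb (1+4*i+1) = !tb i := by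
    rw [show 1+4*i+1 = 2*(2*i+1) by omega, tb_two_mul, tb_two_mul_add_one]
  rw [e1, e2, e3, e4]
  exact bool_flip_iff _ _

lemma BND_O0' (x z : ℕ → Bool) (hx : ∀ m, x m = muw z m) : BND x tb1 := by
  apply BND_odd x tb1 0
  intro i
  have e1 : x (0+4*i) = z (2*i) := by
    rw [hx, show (0+4*i : ℕ) = 2*(2*i) by omega, muw_even]
  have e2 : tb1 (0+4*i) = !tb i := by
    show tb (0+4*i+1) = !tb i
    rw [show 0+4*i+1 = 2*(2*i)+1 by omega, tb_two_mul_add_one, tb_two_mul]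
  have e3 : x (0+4*i+1) = !z (2*i) := by
    rw [hx, show (0+4*i+1 : ℕ) = 2*(2*i)+1 by omega, muw_odd]
  have e4 : tb1 (0+4*i+1) = !tb i := by
    show tb (0+4*i+1+1) = !tb i
    rw [show 0+4*i+1+1 = 2*(2*i+1) by omega, tb_two_mul, tb_two_mul_add_one]
  rw [e1, e2, e3, e4]
  exact bool_flip_iff _ _

lemma BND_O2' (x z : ℕ → Bool) (hx : ∀ m, x (2+m) = muw z m) : BND x tb1 := by
  apply BND_odd x tb1 4
  intro i
  have e1 : x (4+4*i) = z (2*i+1) := by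
    rw [show 4+4*i = 2+(2*(2*i+1)) by omega, hx, muw_even]
  have e2 : tb1 (4+4*i) = !tb (i+1) := by
    show tb (4+4*i+1) = !tb (i+1)
    rw [show 4+4*i+1 = 2*(2*(i+1))+1 by omega, tb_two_mul_add_one, tb_two_mul]
  have e3 : x (4+4*i+1) = !z (2*i+1) := by
    rw [show 4+4*i+1 = 2+(2*(2*i+1)+1) by omega, hx, muw_odd]
  have e4 : tb1 (4+4*i+1) = !tb (i+1) := by
    show tb (4+4*i+1+1) = !tb (i+1)
    rw [show 4+4*i+1+1 = 2*(2*(i+1)+1) by omega, tb_two_mul, tb_two_mul_add_one]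
  rw [e1, e2, e3, e4]
  exact bool_flip_iff _ _

def StepSpec (u z : ℕ → Bool) (t : ℕ) : Prop :=
  (t = 0 ∧ ∀ m, u m = muw z m) ∨ (t = 1 ∧ ∀ m, u (1+m) = muw z m) ∨
  (t = 2 ∧ u 0 = u 1 ∧ ∀ m, u (2+m) = muw z m)

lemma step_exists {u : ℕ → Bool} (hu : OverlapFree u) :
    ∃ z, OverlapFree z ∧ ∃ t, StepSpec u z t := by
  rcases struct_thm hu with ⟨z,hz,hm⟩|⟨z,hz,hm⟩|⟨z,hz,h01,hm⟩
  · exact ⟨z, hz, 0, Or.inl ⟨rfl, hm⟩⟩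
  · exact ⟨z, hz, 1, Or.inr (Or.inl ⟨rfl, hm⟩)⟩
  · exact ⟨z, hz, 2, Or.inr (Or.inr ⟨rfl, h01, hm⟩)⟩

noncomputable def Wseq (w0 : ℕ → Bool) (hw0 : OverlapFree w0) : ℕ → {u : ℕ → Bool // OverlapFree u}
  | 0 => ⟨w0, hw0⟩
  | k+1 => ⟨(step_exists (Wseq w0 hw0 k).2).choose, (step_exists (Wseq w0 hw0 k).2).choose_spec.1⟩

noncomputable def tagf (w0 : ℕ → Bool) (hw0 : OverlapFree w0) (k : ℕ) : ℕ :=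
  ((step_exists (Wseq w0 hw0 k).2).choose_spec.2).choose

lemma Wspec (w0 : ℕ → Bool) (hw0 : OverlapFree w0) (k : ℕ) :
    StepSpec (Wseq w0 hw0 k).1 (Wseq w0 hw0 (k+1)).1 (tagf w0 hw0 k) := by
  have h := ((step_exists (Wseq w0 hw0 k).2).choose_spec.2).choose_spec
  exact h

lemma spec_tag0 {u z : ℕ → Bool} {t : ℕ} (h : StepSpec u z t) (ht : t = 0) :
    ∀ m, u m = muw z m := by
  rcases h with ⟨_, h⟩ | ⟨h1, _⟩ | ⟨h1, _⟩
  · exact h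
  · exact absurd (ht ▸ h1) (by norm_num)
  · exact absurd (ht ▸ h1) (by norm_num)

lemma spec_tag1 {u z : ℕ → Bool} {t : ℕ} (h : StepSpec u z t) (ht : t = 1) :
    ∀ m, u (1+m) = muw z m := by
  rcases h with ⟨h1, _⟩ | ⟨_, h⟩ | ⟨h1, _⟩
  · exact absurd (ht ▸ h1) (by norm_num)
  · exact h
  · exact absurd (ht ▸ h1) (by norm_num)

lemma mu_chain_tm (U : ℕ → ℕ → Bool) (h : ∀ k m, U k m = muw (U (k+1)) m) :
    ∀ m k, U k m = ((tb m) ^^ (U k 0)) := by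
  intro m
  induction m using Nat.strong_induction_on with
  | _ m IH =>
  intro k
  have h00 : U k 0 = U (k+1) 0 := by
    rw [h k 0, show (0:ℕ) = 2*0 by rfl, muw_even]
  rcases Nat.eq_zero_or_pos m with h0 | h0
  · subst h0
    rw [tb_zero, Bool.false_xor]
  rcases Nat.even_or_odd m with ⟨j, hj⟩ | ⟨j, hj⟩
  · have hjm : j < m := by omega
    rw [show m = 2*j by omega, h k, muw_even, IH j (by omega) (k+1), tb_two_mul, h00]
  · have hjm : j < m := by omega
    rw [show m = 2*j+1 by omega, h k, muw_odd, IH j (by omega) (k+1), tb_two_mul_add_one,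
      h00]
    cases tb j <;> cases U (k+1) 0 <;> rfl

theorem main_theorem (w : ℕ → Bool) (hw : OverlapFree w)
    (h1 : w ≠ tb) (h2 : w ≠ fun n => !(tb n)) :
    1/4 ≤ LSD w tb ∧ LSD w tb ≤ USD w tb ∧ USD w tb ≤ 3/4 := by
  classical
  apply final_bounds
  -- goal : BND w tb
  have hW0 : (Wseq w hw 0).1 = w := rfl
  have desc0 : ∀ j i, (∀ k, i ≤ k → k < i + j → tagf w hw k = 0) →
      BND (Wseq w hw (i+j)).1 tb → BND (Wseq w hw i).1 tb := by
    intro j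
    induction j with
    | zero => intro i _ hb; exact hb
    | succ j ih =>
      intro i hk hb
      have hx := spec_tag0 (Wspec w hw i) (hk i le_rfl (by omega))
      apply BND_E0 _ _ hx
      apply ih (i+1) (fun k hk1 hk2 => hk k (by omega) (by omega))
      rw [show i+1+j = i+(j+1) by omega]
      exact hb
  have desc1 : ∀ j i, (∀ k, i ≤ k → k < i + j → tagf w hw k = 1) →
      BND (Wseq w hw (i+j)).1 tb1 → BND (Wseq w hw i).1 tb1 := by
    intro j
    induction j with
    | zero => intro i _ hb; exact hb
    | succ j ih =>
      intro i hk hb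
      have hx := spec_tag1 (Wspec w hw i) (hk i le_rfl (by omega))
      apply BND_E1' _ _ hx
      apply ih (i+1) (fun k hk1 hk2 => hk k (by omega) (by omega))
      rw [show i+1+j = i+(j+1) by omega]
      exact hb
  by_cases hall0 : ∀ k, tagf w hw k = 0
  · exfalso
    have hcc : ∀ k m, (Wseq w hw k).1 m = muw ((Wseq w hw (k+1)).1) m :=
      fun k => spec_tag0 (Wspec w hw k) (hall0 k)
    have hval := mu_chain_tm (fun k => (Wseq w hw k).1) hcc
    cases h0 : w 0
    · apply h1
      funext m
      have hv : w m = ((tb m) ^^ (w 0)) := hval m 0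
      rw [hv, h0, Bool.xor_false]
    · apply h2
      funext m
      have hv : w m = ((tb m) ^^ (w 0)) := hval m 0
      rw [hv, h0, Bool.xor_true]
  · push_neg at hall0
    have hex : ∃ k, tagf w hw k ≠ 0 := hall0
    set K := Nat.find hex with hKdef
    have hKne : tagf w hw K ≠ 0 := Nat.find_spec hex
    have hKmin : ∀ k, k < K → tagf w hw k = 0 := fun k hk => by
      have := Nat.find_min hex hk
      push_neg at this
      exact this
    -- it suffices to show BND (Wseq K).1 tb
    have reduce : BND (Wseq w hw K).1 tb → BND w tb := by
      intro hb
      rw [← hW0]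
      apply desc0 K 0 (fun k hk1 hk2 => hKmin k (by omega))
      rw [show 0+K = K by omega]
      exact hb
    apply reduce
    rcases Wspec w hw K with ⟨ht, _⟩ | ⟨ht, hx⟩ | ⟨ht, h01, hx⟩
    · exact absurd ht hKne
    · exact BND_O1 _ _ hx
    · -- tag 2 at K
      by_cases hall1 : ∀ k, K < k → tagf w hw k = 1
      · -- chain case
        set U : ℕ → ℕ → Bool := fun i => (Wseq w hw (K+1+i)).1 with hUdef
        have hU : ∀ i m, U i (1+m) = muw (U (i+1)) m := by
          intro i m
          have hs1 := spec_tag1 (Wspec w hw (K+1+i)) (hall1 (K+1+i) (by omega))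
          have e : K+1+i+1 = K+1+(i+1) := by omega
          rw [e] at hs1
          exact hs1 m
        have hvx : ∀ m, (Wseq w hw K).1 (2+m) = muw (U 0) m := hx
        have rigid := chain_rigid (Wseq w hw K).1 U (Wseq w hw K).2 h01 hvx hU
        have cval := chain_val U hU
        set b := (Wseq w hw K).1 0 with hbdef
        set z : ℕ := if b = true then 1 else 0 with hzdef
        have hlog : ∀ m, ((U 0 m = tb1 m) ↔ Nat.log 2 (m+1) % 2 = z) := by
          intro m
          set k := Nat.log 2 (m+1) with hkdef
          have hlb : 2^k ≤ m+1 := Nat.pow_log_le_self 2 (by omega)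
          have hub : m+1 < 2^(k+1) := Nat.lt_pow_succ_log_self (by norm_num) (m+1)
          set i := m+1 - 2^k with hidef
          have hik : i < 2^k := by rw [pow_succ] at hub; omega
          have hm : m = 2^k - 1 + i := by
            have := Nat.one_le_two_pow (n := k)
            omega
          have hUval : U 0 m = ((tb i) ^^ (U k 0)) := by
            rw [hm, cval k 0 i hik, show 0+k = k by omega]
          have htb1 : tb1 m = !tb i := by
            show tb (m+1) = !tb i
            rw [show m+1 = 2^k + i by omega, tb_pow_add hik]
          rw [hUval, htb1]
          have hxor : (((tb i) ^^ (U k 0)) = !tb i) ↔ (U k 0 = true) := bool_xor_eq_not _ _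
          have hfin : ∀ (bb : Bool) (kk zz : ℕ), kk % 2 = 0 ∨ kk % 2 = 1 →
              zz = (if bb = true then 1 else 0) →
              (((if kk % 2 = 0 then !bb else bb) = true) ↔ kk % 2 = zz) := by
            intro bb kk zz hpar hzz
            cases bb <;> rcases hpar with hp | hp <;> subst hzz <;> simp [hp]
          rw [hxor, rigid k]
          exact hfin b k z (Nat.mod_two_eq_zero_or_one k) hzdef
        have hblog : BND (U 0) tb1 := BND_log (U 0) tb1 z (by rw [hzdef]; split <;> omega) hlog
        exact BND_E2 _ _ hx hblog
      · push_neg at hall1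
        obtain ⟨k1, hk1K, hk1ne⟩ := hall1
        have hex2 : ∃ j, tagf w hw (K+1+j) ≠ 1 :=
          ⟨k1 - (K+1), by rw [show K+1+(k1-(K+1)) = k1 by omega]; exact hk1ne⟩
        set J := Nat.find hex2 with hJdef
        have hJne : tagf w hw (K+1+J) ≠ 1 := Nat.find_spec hex2
        have hJmin : ∀ j, j < J → tagf w hw (K+1+j) = 1 := fun j hj => by
          have := Nat.find_min hex2 hj
          push_neg at this
          exact this
        have hend : BND (Wseq w hw (K+1+J)).1 tb1 := by
          rcases Wspec w hw (K+1+J) with ⟨ht2, hx2⟩ | ⟨ht2, hx2⟩ | ⟨ht2, h012, hx2⟩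
          · exact BND_O0' _ _ hx2
          · exact absurd ht2 hJne
          · exact BND_O2' _ _ hx2
        have hmid : BND (Wseq w hw (K+1)).1 tb1 := by
          apply desc1 J (K+1) (fun k hk1 hk2 => by
            have := hJmin (k - (K+1)) (by omega)
            rw [show K+1+(k-(K+1)) = k by omega] at this
            exact this)
          exact hend
        exact BND_E2 _ _ hx hmid
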